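/- λx.Ω∥Ω is not typable: there is no context Δ and type α with Δ ⊢ (λx.Ω)∥Ω : α, even though λx.Ω and λx.Ω + Ω are typable with type 1. -/

import Mathlib

-- Computational and parallel types
mutual
  inductive CTy : Type
    | one : CTy
    | tens : CTy → CTy → CTy
    | arr : CTy → PTy → CTy
  inductive PTy : Type
    | ofC : CTy → PTy
    | par : PTy → PTy → PTy
end

-- Type equivalence: AC of ⊗ and ⅋, 1 neutral for ⊗
mutual
  inductive CEq : CTy → CTy → Prop
    | refl (τ) : CEq τ τ
    | symm : CEq τ ρ → CEq ρ τ
    | trans : CEq τ ρ → CEq ρ σ → CEq τ σ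
    | comm (τ ρ) : CEq (.tens τ ρ) (.tens ρ τ)
    | assoc (τ ρ σ) : CEq (.tens (.tens τ ρ) σ) (.tens τ (.tens ρ σ))
    | unit (τ) : CEq (.tens τ .one) τ
    | tensCongr : CEq τ τ' → CEq ρ ρ' → CEq (.tens τ ρ) (.tens τ' ρ')
    | arrCongr : CEq τ τ' → PEq α α' → CEq (.arr τ α) (.arr τ' α')
  inductive PEq : PTy → PTy → Prop
    | refl (α) : PEq α α
    | symm : PEq α β → PEq β α
    | trans : PEq α β → PEq β γ → PEq α γ
    | comm (α β) : PEq (.par α β) (.par β α)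
    | assoc (α β γ) : PEq (.par (.par α β) γ) (.par α (.par β γ))
    | parCongr : PEq α α' → PEq β β' → PEq (.par α β) (.par α' β')
    | ofC : CEq τ τ' → PEq (.ofC τ) (.ofC τ')
end

def Ctx : Type := ℕ → CTy
def Ctx.empty : Ctx := fun _ => CTy.one
def Ctx.tens (Γ Δ : Ctx) : Ctx := fun n => CTy.tens (Γ n) (Δ n)
def Ctx.single (x : ℕ) (τ : CTy) : Ctx := fun n => if n = x then τ else CTy.one
def Ctx.cons (τ : CTy) (Γ : Ctx) : Ctx := fun n =>
  match n with
  | 0 => τ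
  | n+1 => Γ n
def CtxEq (Γ Δ : Ctx) : Prop := ∀ n, CEq (Γ n) (Δ n)

def tensList (l : List CTy) : CTy := l.foldr CTy.tens CTy.one
def tensFin (n : ℕ) (f : Fin n → CTy) : CTy := tensList (List.ofFn f)
def tensCtxFin (n : ℕ) (Δ : Fin n → Ctx) : Ctx := fun x => tensFin n (fun i => Δ i x)

def parList : List PTy → PTy
  | [] => PTy.ofC CTy.one
  | [α] => α
  | α :: β :: rest => PTy.par α (parList (β :: rest))

def parFin (n : ℕ) (f : Fin n → PTy) : PTy := parList (List.ofFn f)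

/-- ⅋ᵏ1 : the par of k copies of 1 (left associated); junk value at 0. -/
def parOnes : ℕ → PTy
  | 0 => PTy.ofC CTy.one
  | 1 => PTy.ofC CTy.one
  | n+2 => PTy.par (parOnes (n+1)) (PTy.ofC CTy.one)

/-- Terms of Λ₊∥ in de Bruijn notation. -/
inductive Tm : Type
  | var : ℕ → Tm
  | lam : Tm → Tm
  | app : Tm → Tm → Tm
  | plus : Tm → Tm → Tm
  | par : Tm → Tm → Tm

def IsValue : Tm → Prop
  | .var _ => True
  | .lam _ => True
  | _ => False

def IsPar : Tm → Prop
  | .par _ _ => True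
  | _ => False

def shiftTm (c : ℕ) : Tm → Tm
  | .var n => if n < c then .var n else .var (n+1)
  | .lam M => .lam (shiftTm (c+1) M)
  | .app M N => .app (shiftTm c M) (shiftTm c N)
  | .plus M N => .plus (shiftTm c M) (shiftTm c N)
  | .par M N => .par (shiftTm c M) (shiftTm c N)

/-- Capture-avoiding substitution `M[V/k]` (de Bruijn). -/
def substTm : Tm → ℕ → Tm → Tm
  | .var n, k, V => if n = k then V else if k < n then .var (n-1) else .var n
  | .lam M, k, V => .lam (substTm M (k+1) (shiftTm 0 V))
  | .app M N, k, V => .app (substTm M k V) (substTm N k V)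
  | .plus M N, k, V => .plus (substTm M k V) (substTm N k V)
  | .par M N, k, V => .par (substTm M k V) (substTm N k V)

def closedUnder : ℕ → Tm → Prop
  | d, .var n => n < d
  | d, .lam M => closedUnder (d+1) M
  | d, .app M N => closedUnder d M ∧ closedUnder d N
  | d, .plus M N => closedUnder d M ∧ closedUnder d N
  | d, .par M N => closedUnder d M ∧ closedUnder d N

def Closed (M : Tm) : Prop := closedUnder 0 M

/-- One-step reduction; the boolean flag records whether a +-reduction is used. -/
inductive Step : Bool → Tm → Tm → Prop
  | beta {M V} : IsValue V → Step false (.app (.lam M) V) (substTm M 0 V)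
  | plusL (M N) : Step true (.plus M N) M
  | plusR (M N) : Step true (.plus M N) N
  | parAppL (M N P) : Step false (.app (.par M N) P) (.par (.app M P) (.app N P))
  | parAppR {V} (M N) : IsValue V → Step false (.app V (.par M N)) (.par (.app V M) (.app V N))
  | parL {b M M'} (N) : Step b M M' → Step b (.par M N) (.par M' N)
  | parR {b N N'} (M) : Step b N N' → Step b (.par M N) (.par M N')
  | appL {b M M'} (N) : Step b M M' → ¬ IsPar M → Step b (.app M N) (.app M' N)
  | appR {b M M' V} : IsValue V → Step b M M' → ¬ IsPar M → Step b (.app V M) (.app V M')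

/-- The two contracta of a single +-redex, reduced in context. -/
inductive PlusPair : Tm → Tm → Tm → Prop
  | base (M N) : PlusPair (.plus M N) M N
  | parL {M M₁ M₂} (N) : PlusPair M M₁ M₂ → PlusPair (.par M N) (.par M₁ N) (.par M₂ N)
  | parR {N N₁ N₂} (M) : PlusPair N N₁ N₂ → PlusPair (.par M N) (.par M N₁) (.par M N₂)
  | appL {M M₁ M₂} (N) : PlusPair M M₁ M₂ → ¬ IsPar M → PlusPair (.app M N) (.app M₁ N) (.app M₂ N)
  | appR {M M₁ M₂ V} : IsValue V → PlusPair M M₁ M₂ → ¬ IsPar M → PlusPair (.app V M) (.app V M₁) (.app V M₂)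

/-- n-step reduction. -/
inductive Steps : ℕ → Tm → Tm → Prop
  | refl (M) : Steps 0 M M
  | head {b M N P n} : Step b M N → Steps n N P → Steps (n+1) M P

/-- A closed term converges iff it reduces to a parallel composition of values. -/
def Converges (M : Tm) : Prop :=
  ∃ (n : ℕ) (V : Tm) (Vs : List Tm), IsValue V ∧ (∀ W ∈ Vs, IsValue W) ∧
    Steps n M (Vs.foldl Tm.par V)

/-- Typing derivations, indexed by the measure |π|. -/
inductive Deriv : Ctx → Tm → PTy → ℕ → Prop
  | ax (x : ℕ) (τ : CTy) : Deriv (Ctx.single x τ) (.var x) (.ofC τ) 0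
  | lamI (n : ℕ) (Δ : Fin n → Ctx) (τ : Fin n → CTy) (α : Fin n → PTy) (ms : Fin n → ℕ)
      (M : Tm) :
      (∀ i, Deriv (Ctx.cons (τ i) (Δ i)) M (α i) (ms i)) →
      Deriv (tensCtxFin n Δ) (.lam M)
        (.ofC (tensFin n (fun i => .arr (τ i) (α i)))) (∑ i, ms i)
  | appE (k : ℕ) (hk : 0 < k) (nf : Fin k → ℕ) (hn : ∀ i, 0 < nf i)
      (τ : ∀ i : Fin k, Fin (nf i) → CTy) (α : ∀ i : Fin k, Fin (nf i) → PTy)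
      (Δ : Ctx) (Γ : Fin k → Ctx) (m0 : ℕ) (ms : Fin k → ℕ) (M N : Tm) :
      Deriv Δ M (parFin k (fun i => .ofC (tensFin (nf i) (fun j => .arr (τ i j) (α i j))))) m0 →
      (∀ i, Deriv (Γ i) N (parFin (nf i) (fun j => .ofC (τ i j))) (ms i)) →
      Deriv (Ctx.tens Δ (tensCtxFin k Γ)) (.app M N)
        (parFin k (fun i => parFin (nf i) (α i)))
        ((m0 + (∑ i, ms i) + (∑ i, 2 * nf i)) - 1)
  | plusL {Δ M α m} (N) : Deriv Δ M α m → Deriv Δ (.plus M N) α (m+1)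
  | plusR {Δ N α m} (M) : Deriv Δ N α m → Deriv Δ (.plus M N) α (m+1)
  | parI {Δ Γ M N α β m m'} : Deriv Δ M α m → Deriv Γ N β m' →
      Deriv (Ctx.tens Δ Γ) (.par M N) (.par α β) (m + m')
  | eqv {Γ Γ' M α α' m} : Deriv Γ M α m → CtxEq Γ Γ' → PEq α α' → Deriv Γ' M α' m

def deltaTm : Tm := .lam (.app (.var 0) (.var 0))
def OmegaTm : Tm := .app deltaTm deltaTm
def Idt : Tm := .lam (.var 0)
def dstarTm : Tm := .lam (.lam (.app (.var 1) (.var 1)))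
def YstarTm : Tm := .app dstarTm dstarTm


/-! ### Auxiliary development -/


/-- Relation on pairs (domain, codomain) of arrow types. -/
instance pairSetoid : Setoid (CTy × PTy) where
  r p q := CEq p.1 q.1 ∧ PEq p.2 q.2
  iseqv := ⟨fun _ => ⟨.refl _, .refl _⟩, fun h => ⟨h.1.symm, h.2.symm⟩,
    fun h h' => ⟨h.1.trans h'.1, h.2.trans h'.2⟩⟩

abbrev QArr := Quotient pairSetoid

/-- Multiset of top-level arrow leaves of a computational type. -/
def leavesC : CTy → Multiset QArr
  | .one => 0
  | .tens a b => leavesC a + leavesC b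
  | .arr a b => {(⟦(a, b)⟧ : QArr)}

mutual
  def csize : CTy → ℕ
    | .one => 0
    | .tens a b => csize a + csize b
    | .arr a b => 1 + csize a + psize b
  def psize : PTy → ℕ
    | .ofC a => csize a
    | .par a b => psize a + psize b
end

def pcard : PTy → ℕ
  | .ofC _ => 1
  | .par a b => pcard a + pcard b

theorem pcard_pos : ∀ α, 0 < pcard α
  | .ofC _ => Nat.one_pos
  | .par a _ => Nat.lt_of_lt_of_le (pcard_pos a) (Nat.le_add_right _ _)

theorem pcard_one_ofC : ∀ α, pcard α = 1 → ∃ a, α = .ofC a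
  | .ofC a, _ => ⟨a, rfl⟩
  | .par a b, h => by
      have ha := pcard_pos a
      have hb := pcard_pos b
      simp [pcard] at h
      omega

/-- Master invariance theorem, by mutual induction on CEq/PEq. -/
theorem eq_master :
    (∀ {a b : CTy}, CEq a b → leavesC a = leavesC b ∧ csize a = csize b) ∧
    (∀ {α β : PTy}, PEq α β → pcard α = pcard β ∧ psize α = psize β ∧
      (∀ x, α = .ofC x → ∀ y, β = .ofC y → CEq x y)) := by
  refine ⟨@CEq.rec (fun a b _ => leavesC a = leavesC b ∧ csize a = csize b)
      (fun α β _ => pcard α = pcard β ∧ psize α = psize β ∧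
        (∀ x, α = .ofC x → ∀ y, β = .ofC y → CEq x y))
      ?c1 ?c2 ?c3 ?c4 ?c5 ?c6 ?c7 ?c8 ?c9 ?c10 ?c11 ?c12 ?c13 ?c14 ?c15,
    @PEq.rec (fun a b _ => leavesC a = leavesC b ∧ csize a = csize b)
      (fun α β _ => pcard α = pcard β ∧ psize α = psize β ∧
        (∀ x, α = .ofC x → ∀ y, β = .ofC y → CEq x y))
      ?c1 ?c2 ?c3 ?c4 ?c5 ?c6 ?c7 ?c8 ?c9 ?c10 ?c11 ?c12 ?c13 ?c14 ?c15⟩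
  case c1 => exact fun τ => ⟨rfl, rfl⟩
  case c2 => exact fun _ ih => ⟨ih.1.symm, ih.2.symm⟩
  case c3 => exact fun _ _ ih1 ih2 => ⟨ih1.1.trans ih2.1, ih1.2.trans ih2.2⟩
  case c4 =>
    intro τ ρ
    exact ⟨by simp only [leavesC]; exact add_comm _ _,
      by simp only [csize]; exact Nat.add_comm _ _⟩
  case c5 =>
    intro τ ρ σ
    exact ⟨by simp only [leavesC]; exact add_assoc _ _ _,
      by simp only [csize]; exact Nat.add_assoc _ _ _⟩
  case c6 =>
    intro τ
    exact ⟨by simp only [leavesC]; exact add_zero _,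
      by simp only [csize]; exact Nat.add_zero _⟩
  case c7 =>
    intro τ τ' ρ ρ' h1 h2 ih1 ih2
    constructor <;> simp only [leavesC, csize, ih1.1, ih1.2, ih2.1, ih2.2]
  case c8 =>
    intro τ τ' aa aa' hC hP ihC ihP
    constructor
    · simp only [leavesC]
      exact congrArg (fun q => ({q} : Multiset QArr)) (Quotient.sound ⟨hC, hP⟩)
    · simp [csize, ihC.2, ihP.2.1]
  case c9 =>
    intro α
    refine ⟨rfl, rfl, fun x hx y hy => ?_⟩
    rw [hx] at hy
    cases hy
    exact .refl _
  case c10 =>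
    intro aa bb hab ih
    exact ⟨ih.1.symm, ih.2.1.symm, fun x hx y hy => (ih.2.2 y hy x hx).symm⟩
  case c11 =>
    intro aa bb cc hαβ hβγ ih1 ih2
    refine ⟨ih1.1.trans ih2.1, ih1.2.1.trans ih2.2.1, fun x hx y hy => ?_⟩
    obtain ⟨z, hz⟩ := pcard_one_ofC _ (by rw [← ih1.1, hx]; rfl)
    exact (ih1.2.2 x hx z hz).trans (ih2.2.2 z hz y hy)
  case c12 =>
    intro α β
    refine ⟨by simp [pcard]; omega, by simp [psize]; omega, fun x hx => by cases hx⟩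
  case c13 =>
    intro α β γ
    refine ⟨by simp [pcard]; omega, by simp [psize]; omega, fun x hx => by cases hx⟩
  case c14 =>
    intro aa aa' bb bb' h1 h2 ih1 ih2
    refine ⟨by simp [pcard, ih1.1, ih2.1], by simp [psize, ih1.2.1, ih2.2.1],
      fun x hx => by cases hx⟩
  case c15 =>
    intro ta tb hC ih
    refine ⟨rfl, by simpa [psize] using ih.2, fun x hx y hy => ?_⟩
    cases hx; cases hy
    exact hC

theorem ceq_leaves {a b : CTy} (h : CEq a b) : leavesC a = leavesC b := (eq_master.1 h).1
theorem ceq_csize {a b : CTy} (h : CEq a b) : csize a = csize b := (eq_master.1 h).2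
theorem peq_pcard {α β : PTy} (h : PEq α β) : pcard α = pcard β := (eq_master.2 h).1
theorem peq_ofC {a b : CTy} (h : PEq (.ofC a) (.ofC b)) : CEq a b :=
  (eq_master.2 h).2.2 a rfl b rfl

/-! ### parList / tensList computations -/

theorem tensFin_zero (f : Fin 0 → CTy) : tensFin 0 f = .one := by
  simp [tensFin, tensList]

theorem parFin_one (f : Fin 1 → PTy) : parFin 1 f = f 0 := by
  simp [parFin, List.ofFn_succ, parList]

theorem tensFin_one (f : Fin 1 → CTy) : tensFin 1 f = .tens (f 0) .one := by
  simp [tensFin, List.ofFn_succ, tensList]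

theorem parFin_eq_one {n : ℕ} (h : n = 1) (f : Fin n → PTy) :
    parFin n f = f ⟨0, by omega⟩ := by
  subst h; rw [parFin_one]; exact congrArg f (Subsingleton.elim _ _)

theorem tensFin_eq_one {n : ℕ} (h : n = 1) (f : Fin n → CTy) :
    tensFin n f = .tens (f ⟨0, by omega⟩) .one := by
  subst h; rw [tensFin_one]
  exact congrArg (fun x => CTy.tens (f x) .one) (Subsingleton.elim _ _)

theorem pcard_parList : ∀ (l : List PTy), (∀ x ∈ l, pcard x = 1) →
    pcard (parList l) = max 1 l.length
  | [], _ => by simp [parList, pcard]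
  | [a], h => by simp [parList, h a (by simp)]
  | a :: b :: r, h => by
      have hr := pcard_parList (b :: r) (fun x hx => h x (List.mem_cons_of_mem _ hx))
      have ha := h a List.mem_cons_self
      simp only [parList, pcard, ha, hr, List.length_cons]
      omega

theorem parFin_ofC_card {k : ℕ} (hk : 0 < k) {f : Fin k → PTy}
    (hf : ∀ i, ∃ a, f i = .ofC a) {b : CTy} (h : PEq (.ofC b) (parFin k f)) : k = 1 := by
  have h1 := peq_pcard h
  rw [parFin, pcard_parList] at h1
  · simp only [List.length_ofFn] at h1
    have : pcard (.ofC b) = 1 := rfl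
    omega
  · intro x hx
    obtain ⟨i, hi⟩ := List.mem_ofFn.1 hx
    obtain ⟨a, ha⟩ := hf i
    rw [← hi, ha]
    rfl

theorem leavesC_tensList : ∀ l : List CTy, leavesC (tensList l) = (l.map leavesC).sum
  | [] => rfl
  | a :: r => by
      show leavesC (.tens a (tensList r)) = _
      simp [leavesC, leavesC_tensList r]


theorem leavesC_tensFin_arr {n : ℕ} (f : Fin n → CTy) (g : Fin n → PTy) :
    leavesC (tensFin n (fun i => .arr (f i) (g i))) =
      ∑ i : Fin n, ({(⟦(f i, g i)⟧ : QArr)} : Multiset QArr) := by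
  rw [tensFin, leavesC_tensList, List.map_ofFn, List.sum_ofFn]
  exact Finset.sum_congr rfl fun i _ => rfl

/-! ### CtxEq helpers -/

theorem CtxEq.rfl (Γ : Ctx) : CtxEq Γ Γ := fun _ => .refl _
theorem CtxEq.symm' {Γ Δ : Ctx} (h : CtxEq Γ Δ) : CtxEq Δ Γ := fun n => (h n).symm
theorem CtxEq.trans' {Γ Δ E : Ctx} (h : CtxEq Γ Δ) (h' : CtxEq Δ E) : CtxEq Γ E :=
  fun n => (h n).trans (h' n)

/-! ### Inversion lemmas -/

theorem var_inv {Γ M α m} (h : Deriv Γ M α m) : ∀ x, M = .var x →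
    ∃ τ, PEq (.ofC τ) α ∧ CtxEq (Ctx.single x τ) Γ := by
  induction h with
  | ax x τ => exact fun y hy => by cases hy; exact ⟨τ, .refl _, CtxEq.rfl _⟩
  | eqv _ hc hp ih =>
      exact fun y hy => by
        obtain ⟨τ, h1, h2⟩ := ih y hy
        exact ⟨τ, h1.trans hp, h2.trans' hc⟩
  | lamI => exact fun y hy => by cases hy
  | appE => exact fun y hy => by cases hy
  | plusL => exact fun y hy => by cases hy
  | plusR => exact fun y hy => by cases hy
  | parI => exact fun y hy => by cases hy

theorem lam_inv {Γ M β m} (h : Deriv Γ M β m) : ∀ M', M = .lam M' →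
    ∃ (n : ℕ) (Δ : Fin n → Ctx) (τ : Fin n → CTy) (α : Fin n → PTy) (ms : Fin n → ℕ),
      (∀ i, Deriv (Ctx.cons (τ i) (Δ i)) M' (α i) (ms i)) ∧
      PEq (.ofC (tensFin n (fun i => .arr (τ i) (α i)))) β ∧
      CtxEq (tensCtxFin n Δ) Γ := by
  induction h with
  | lamI n Δ τ α ms M hprem =>
      exact fun M' hM => by
        cases hM
        exact ⟨n, Δ, τ, α, ms, hprem, .refl _, CtxEq.rfl _⟩
  | eqv _ hc hp ih =>
      exact fun M' hM => by
        obtain ⟨n, Δ, τ, α, ms, h1, h2, h3⟩ := ih M' hM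
        exact ⟨n, Δ, τ, α, ms, h1, h2.trans hp, h3.trans' hc⟩
  | ax => exact fun y hy => by cases hy
  | appE => exact fun y hy => by cases hy
  | plusL => exact fun y hy => by cases hy
  | plusR => exact fun y hy => by cases hy
  | parI => exact fun y hy => by cases hy

theorem app_inv {Γ M β m} (h : Deriv Γ M β m) : ∀ P N, M = .app P N →
    ∃ (k : ℕ) (_ : 0 < k) (nf : Fin k → ℕ) (_ : ∀ i, 0 < nf i)
      (τ : ∀ i : Fin k, Fin (nf i) → CTy) (α : ∀ i : Fin k, Fin (nf i) → PTy)
      (Δ : Ctx) (G : Fin k → Ctx) (m0 : ℕ) (ms : Fin k → ℕ),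
      Deriv Δ P (parFin k (fun i => .ofC (tensFin (nf i) (fun j => .arr (τ i j) (α i j))))) m0 ∧
      (∀ i, Deriv (G i) N (parFin (nf i) (fun j => .ofC (τ i j))) (ms i)) ∧
      PEq (parFin k (fun i => parFin (nf i) (α i))) β ∧
      CtxEq (Ctx.tens Δ (tensCtxFin k G)) Γ := by
  induction h with
  | appE k hk nf hn τ α Δ G m0 ms M N h1 h2 =>
      exact fun P Q hM => by
        cases hM
        exact ⟨k, hk, nf, hn, τ, α, Δ, G, m0, ms, h1, h2, .refl _, CtxEq.rfl _⟩
  | eqv _ hc hp ih =>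
      exact fun P Q hM => by
        obtain ⟨k, hk, nf, hn, τ, α, Δ, G, m0, ms, h1, h2, h3, h4⟩ := ih P Q hM
        exact ⟨k, hk, nf, hn, τ, α, Δ, G, m0, ms, h1, h2, h3.trans hp, h4.trans' hc⟩
  | ax => exact fun y z hy => by cases hy
  | lamI => exact fun y z hy => by cases hy
  | plusL => exact fun y z hy => by cases hy
  | plusR => exact fun y z hy => by cases hy
  | parI => exact fun y z hy => by cases hy

theorem par_inv {Γ M β m} (h : Deriv Γ M β m) : ∀ P N, M = .par P N →
    ∃ Δ₁ Δ₂ γ₁ γ₂ m₁ m₂, Deriv Δ₁ P γ₁ m₁ ∧ Deriv Δ₂ N γ₂ m₂ := by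
  induction h with
  | parI h1 h2 => exact fun P Q hM => by cases hM; exact ⟨_, _, _, _, _, _, h1, h2⟩
  | eqv _ _ _ ih => exact ih
  | ax => exact fun y z hy => by cases hy
  | lamI => exact fun y z hy => by cases hy
  | appE => exact fun y z hy => by cases hy
  | plusL => exact fun y z hy => by cases hy
  | plusR => exact fun y z hy => by cases hy

/-! ### Shape of types of δ = λx. x x -/

theorem delta_shape {Γ σ m} (h : Deriv Γ deltaTm (.ofC σ) m) :
    ∃ (n : ℕ) (τ : Fin n → CTy) (α : Fin n → PTy),
      CEq σ (tensFin n (fun i => .arr (τ i) (α i))) ∧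
      ∀ i, ∃ d, CEq (τ i) (.tens (.arr d (α i)) d) := by
  obtain ⟨n, Δ, τ, α, ms, hprem, htyp, hctx⟩ := lam_inv h (.app (.var 0) (.var 0)) rfl
  refine ⟨n, τ, α, (peq_ofC htyp).symm, fun i => ?_⟩
  obtain ⟨k, hk, nf, hn, τ', α', Δ', G, m0, ms', hP, hN, hty, hctx'⟩ :=
    app_inv (hprem i) (.var 0) (.var 0) rfl
  obtain ⟨σ₁, hσ₁, hcσ₁⟩ := var_inv hP 0 rfl
  -- k = 1
  have hk1 : k = 1 := parFin_ofC_card hk (fun i => ⟨_, rfl⟩) hσ₁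
  subst hk1
  rw [parFin_one] at hσ₁ hty
  obtain ⟨σ₂, hσ₂, hcσ₂⟩ := var_inv (hN 0) 0 rfl
  -- nf 0 = 1
  have hn1 : nf 0 = 1 := parFin_ofC_card (hn 0) (fun j => ⟨_, rfl⟩)
    (show PEq (.ofC σ₂) _ from hσ₂)
  set i0 : Fin (nf 0) := ⟨0, hn 0⟩ with hi0
  set d : CTy := τ' 0 i0 with hd
  set c : PTy := α' 0 i0 with hc
  -- σ₁ ≡ (d ⊸ c) ⊗ 1
  rw [tensFin_eq_one hn1] at hσ₁
  have h1 : CEq σ₁ (.tens (.arr d c) .one) := peq_ofC hσ₁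
  -- σ₂ ≡ d
  rw [parFin_eq_one hn1] at hσ₂
  have h2 : CEq σ₂ d := peq_ofC hσ₂
  -- c ≡ α i
  rw [parFin_eq_one hn1] at hty
  -- τ i ≡ tens (Δ' 0) (tens (G 0 0) one)
  have h3 : CEq (.tens (Δ' 0) (tensCtxFin 1 G 0)) (τ i) := hctx' 0
  have h4 : tensCtxFin 1 G 0 = .tens (G 0 0) .one := tensFin_one _
  rw [h4] at h3
  have h5 : CEq σ₁ (Δ' 0) := by
    have := hcσ₁ 0
    simpa [Ctx.single] using this
  have h6 : CEq σ₂ (G 0 0) := by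
    have := hcσ₂ 0
    simpa [Ctx.single] using this
  refine ⟨d, h3.symm.trans ?_⟩
  refine (CEq.tensCongr h5.symm (CEq.tensCongr h6.symm (.refl _))).trans ?_
  refine (CEq.tensCongr h1 (CEq.tensCongr h2 (.refl _))).trans ?_
  refine (CEq.tensCongr (CEq.unit _) (CEq.unit _)).trans ?_
  exact CEq.tensCongr (CEq.arrCongr (.refl _) hty) (.refl _)

/-! ### Infinite descent -/

theorem descent {n : ℕ} (τ : Fin n → CTy) (α : Fin n → PTy)
    (hshape : ∀ i, ∃ e, CEq (τ i) (.tens (.arr e (α i)) e)) :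
    ∀ (s : ℕ) (d : CTy) (γ : PTy), csize d ≤ s →
      (⟦(d, γ)⟧ : QArr) ∈ (∑ i : Fin n, ({(⟦(τ i, α i)⟧ : QArr)} : Multiset QArr)) →
      leavesC d ≤ (∑ i : Fin n, ({(⟦(τ i, α i)⟧ : QArr)} : Multiset QArr)) → False := by
  intro s
  induction s with
  | zero =>
      intro d γ hs hm _
      obtain ⟨i, -, hi⟩ := Multiset.mem_sum.1 hm
      rw [Multiset.mem_singleton] at hi
      obtain ⟨hdτ, -⟩ := Quotient.exact hi
      obtain ⟨e, he⟩ := hshape i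
      have := ceq_csize (hdτ.trans he)
      simp [csize] at this
      omega
  | succ s ih =>
      intro d γ hs hm hl
      obtain ⟨i, -, hi⟩ := Multiset.mem_sum.1 hm
      rw [Multiset.mem_singleton] at hi
      obtain ⟨hdτ, -⟩ := Quotient.exact hi
      obtain ⟨e, he⟩ := hshape i
      have hde := hdτ.trans he
      have hsz := ceq_csize hde
      simp only [csize] at hsz
      have hlv := ceq_leaves hde
      simp only [leavesC] at hlv
      refine ih e (α i) (by omega) ?_ ?_
      · refine Multiset.mem_of_le hl ?_
        rw [hlv]
        simp
      · refine le_trans ?_ hl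
        rw [hlv]
        exact Multiset.le_add_left _ _

/-! ### Ω is not typable -/

theorem omega_not_typable : ∀ Δ α m, ¬ Deriv Δ OmegaTm α m := by
  intro Δ α m h
  obtain ⟨k, hk, nf, hn, τ, α', Δ', G, m0, ms, hP, hN, -, -⟩ :=
    app_inv h deltaTm deltaTm rfl
  -- k = 1 from the function part being a λ
  obtain ⟨n0, Δ0, τ0, α0, ms0, -, htyp0, -⟩ := lam_inv hP (.app (.var 0) (.var 0)) rfl
  have hk1 : k = 1 := parFin_ofC_card hk (fun i => ⟨_, rfl⟩) htyp0
  subst hk1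
  rw [parFin_one] at hP
  -- nf 0 = 1 from the argument part being a λ
  obtain ⟨n1, Δ1, τ1, α1, ms1, -, htyp1, -⟩ := lam_inv (hN 0) (.app (.var 0) (.var 0)) rfl
  have hn1 : nf 0 = 1 := parFin_ofC_card (hn 0) (fun j => ⟨_, rfl⟩) htyp1
  set i0 : Fin (nf 0) := ⟨0, hn 0⟩ with hi0
  set T : CTy := τ 0 i0 with hT
  set A : PTy := α' 0 i0 with hA
  rw [tensFin_eq_one hn1] at hP
  have hN0 := hN 0
  rw [parFin_eq_one hn1] at hN0
  -- first shape: T ≡ (e ⊸ γ) ⊗ e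
  obtain ⟨na, τa, αa, hca, hsa⟩ := delta_shape hP
  have hla := ceq_leaves hca
  rw [leavesC_tensFin_arr] at hla
  simp only [leavesC] at hla
  have hmemA : (⟦(T, A)⟧ : QArr) ∈ ∑ i : Fin na, ({(⟦(τa i, αa i)⟧ : QArr)} : Multiset QArr) := by
    rw [← hla]; simp; rfl
  obtain ⟨ia, -, hia⟩ := Multiset.mem_sum.1 hmemA
  rw [Multiset.mem_singleton] at hia
  obtain ⟨hTa, -⟩ := Quotient.exact hia
  obtain ⟨e, he⟩ := hsa ia
  have hTe : CEq T (.tens (.arr e (αa ia)) e) := hTa.trans he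
  -- second shape: T itself is a type for δ
  obtain ⟨nb, τb, αb, hcb, hsb⟩ := delta_shape hN0
  have hlb := ceq_leaves hcb
  rw [leavesC_tensFin_arr] at hlb
  have hlT := ceq_leaves hTe
  simp only [leavesC] at hlT
  -- leaves T = {(e, αa ia)} + leaves e  and  leaves T = ∑ leaves of the b-family
  refine descent τb αb hsb (csize e) e (αa ia) le_rfl ?_ ?_
  · rw [← hlb, hlT]; simp
  · rw [← hlb, hlT]
    exact Multiset.le_add_left _ _


theorem lam_omega_par_omega_not_typable :
    (∃ m, Deriv Ctx.empty (.lam OmegaTm) (.ofC .one) m) ∧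
    (∃ m, Deriv Ctx.empty (.plus (.lam OmegaTm) OmegaTm) (.ofC .one) m) ∧
    ¬ ∃ (Δ : Ctx) (α : PTy) (m : ℕ), Deriv Δ (.par (.lam OmegaTm) OmegaTm) α m := by
  have hlam : ∃ m, Deriv Ctx.empty (.lam OmegaTm) (.ofC .one) m := by
    refine ⟨_, Deriv.eqv (Deriv.lamI 0 (fun _ => Ctx.empty) (fun _ => .one)
      (fun _ => .ofC .one) (fun _ => 0) OmegaTm (fun i => i.elim0)) ?_ ?_⟩
    · intro x
      show CEq (tensFin 0 _) CTy.one
      rw [tensFin_zero]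
      exact .refl _
    · show PEq (.ofC (tensFin 0 _)) _
      rw [tensFin_zero]
      exact .refl _
  obtain ⟨m₀, hlam0⟩ := hlam
  refine ⟨⟨m₀, hlam0⟩, ⟨m₀ + 1, Deriv.plusL OmegaTm hlam0⟩, ?_⟩
  rintro ⟨Δ, α, m, h⟩
  obtain ⟨Δ₁, Δ₂, γ₁, γ₂, m₁, m₂, -, h2⟩ := par_inv h _ _ rfl
  exact omega_not_typable _ _ _ h2
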